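/- Let t ≥ 11 be a real number and let G be a t-tough (2P2 ∪ P1)-free graph on n vertices with minimum degree δ(G) ≤ n/(t+1) − 1. Suppose every edge uv of G satisfies |N_G(u) ∪ N_G(v)| > 5n/12. Let S = {v ∈ V(G) : d_G(v) < 5n/24} and S1 = {x ∈ S : d_G(x) < n/(t+1)}. Let M be a K_{1,2}-matching in G whose centers are precisely the vertices of S1, let G2 = G − S, let L be the set of pairs formed by the two leaves of each star of M, and let G2* be the graph obtained from G2 by adding each pair in L as an edge (if not already present). Then κ(G2*) ≥ |L| + α(G2*). -/
import Mathlib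


open SimpleGraph

variable {V : Type*}

/-- The number of connected components of `G - S`. -/
noncomputable def SimpleGraph.compCount (G : SimpleGraph V) (S : Set V) : ℕ :=
  Nat.card (G.induce Sᶜ).ConnectedComponent

/-- `S` is a cutset of `G`: `G - S` has at least two connected components. -/
def SimpleGraph.IsCutset (G : SimpleGraph V) (S : Set V) : Prop :=
  2 ≤ G.compCount S

/-- `G` is `t`-tough. -/
def SimpleGraph.Tough (t : ℝ) (G : SimpleGraph V) : Prop :=
  ∀ S : Set V, G.IsCutset S → t * G.compCount S ≤ S.ncard

/-- `G` contains no induced subgraph isomorphic to `H`. -/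
def SimpleGraph.IndFree {W : Type*} (G : SimpleGraph V) (H : SimpleGraph W) : Prop :=
  ¬ ∃ f : W ↪ V, ∀ a b : W, G.Adj (f a) (f b) ↔ H.Adj a b

/-- The 5-vertex graph `2P2 ∪ P1`: two disjoint edges and an isolated vertex. -/
def twoP2P1 : SimpleGraph (Fin 5) :=
  SimpleGraph.fromRel (fun i j => (i = 0 ∧ j = 1) ∨ (i = 2 ∧ j = 3))

/-- The 3-vertex graph `P2 ∪ P1`: an edge and an isolated vertex. -/
def P2P1 : SimpleGraph (Fin 3) :=
  SimpleGraph.fromRel (fun i j => i = 0 ∧ j = 1)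

/-- The path on four vertices `P4`. -/
def P4 : SimpleGraph (Fin 4) :=
  SimpleGraph.fromRel (fun i j => (i = 0 ∧ j = 1) ∨ (i = 1 ∧ j = 2) ∨ (i = 2 ∧ j = 3))

/-- Degree of a vertex, as the cardinality of its neighbor set. -/
noncomputable def SimpleGraph.deg (G : SimpleGraph V) (v : V) : ℕ :=
  (G.neighborSet v).ncard

/-- Minimum degree. -/
noncomputable def SimpleGraph.minDeg (G : SimpleGraph V) : ℕ :=
  sInf (Set.range G.deg)

/-- An independent set of vertices. -/
def SimpleGraph.IsIndepSet' (G : SimpleGraph V) (s : Set V) : Prop :=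
  s.Pairwise (fun u v => ¬ G.Adj u v)

/-- The independence number. -/
noncomputable def SimpleGraph.indepNum' (G : SimpleGraph V) : ℕ :=
  sSup {n : ℕ | ∃ s : Set V, G.IsIndepSet' s ∧ s.ncard = n}

/-- `G` is a complete graph. -/
def SimpleGraph.IsCompleteGraph (G : SimpleGraph V) : Prop :=
  ∀ u v : V, u ≠ v → G.Adj u v

open scoped Classical in
/-- Vertex connectivity: minimum size of a cutset for a noncomplete graph,
and `|V| - 1` for a complete graph. -/
noncomputable def SimpleGraph.kappa (G : SimpleGraph V) : ℕ :=
  if G.IsCompleteGraph then Nat.card V - 1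
  else sInf {n : ℕ | ∃ S : Set V, G.IsCutset S ∧ S.ncard = n}

open scoped Classical in
/-- The scattering number: `max {c(G-S) - |S| : S a cutset}` for a noncomplete graph,
and `⊤` for a complete graph. -/
noncomputable def SimpleGraph.scatter (G : SimpleGraph V) : WithTop ℤ :=
  if G.IsCompleteGraph then ⊤
  else ((sSup {z : ℤ | ∃ S : Set V, G.IsCutset S ∧
      z = (G.compCount S : ℤ) - (S.ncard : ℤ)} : ℤ) : WithTop ℤ)

/-- A `W`-matched path-cover of the vertex set `A`: a union of vertex-disjoint paths of `G`
covering `A`, each of whose two endvertices belong to `W`. -/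
structure SimpleGraph.PathCover (G : SimpleGraph V) (A : Set V) (W : Set V) where
  num : ℕ
  left : Fin num → V
  right : Fin num → V
  walk : ∀ i, G.Walk (left i) (right i)
  isPath : ∀ i, (walk i).IsPath
  disj : ∀ i j, i ≠ j → ∀ v, v ∈ (walk i).support → v ∉ (walk j).support
  cover : A ⊆ {v | ∃ i, v ∈ (walk i).support}
  matched : ∀ i, left i ∈ W ∧ right i ∈ W


lemma edgeless_card_cc {W : Type*} [Finite W] (H : SimpleGraph W) (h : ∀ a b : W, ¬ H.Adj a b) :
    Nat.card H.ConnectedComponent = Nat.card W := by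
  refine (Nat.card_eq_of_bijective H.connectedComponentMk ⟨?_, ?_⟩).symm
  · intro a b hab
    obtain ⟨p⟩ := SimpleGraph.ConnectedComponent.exact hab
    cases p with
    | nil => rfl
    | cons ha _ => exact absurd ha (h _ _)
  · exact fun c => c.exists_rep

lemma tough_indep_bound {V : Type*} [Fintype V] {t : ℝ} {G : SimpleGraph V}
    (htough : G.Tough t) {I : Set V} (hI : I.Pairwise (fun u v => ¬ G.Adj u v))
    (h2 : 2 ≤ I.ncard) :
    t * I.ncard + I.ncard ≤ (Fintype.card V : ℝ) := by
  have hcc : G.compCount Iᶜ = I.ncard := by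
    rw [SimpleGraph.compCount, compl_compl]
    rw [edgeless_card_cc (G.induce I) ?_]
    · rw [Nat.card_coe_set_eq]
    · intro a b hab
      have hadj : G.Adj ↑a ↑b := hab
      exact hI a.2 b.2 hadj.ne hadj
  have hcut : G.IsCutset Iᶜ := by
    rw [SimpleGraph.IsCutset, hcc]; exact h2
  have h3 := htough Iᶜ hcut
  rw [hcc] at h3
  have hsum : I.ncard + Iᶜ.ncard = Fintype.card V := by
    rw [Set.ncard_add_ncard_compl, Nat.card_eq_fintype_card]
  have h4 : (Iᶜ.ncard : ℝ) = (Fintype.card V : ℝ) - I.ncard := by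
    rw [← hsum]; push_cast; ring
  linarith

lemma no_2P2P1 {V : Type*} {G : SimpleGraph V} (hfree : G.IndFree twoP2P1)
    {a b d e z : V}
    (hab : G.Adj a b) (hde : G.Adj d e)
    (had : ¬ G.Adj a d) (hae : ¬ G.Adj a e) (hbd : ¬ G.Adj b d) (hbe : ¬ G.Adj b e)
    (hza : ¬ G.Adj z a) (hzb : ¬ G.Adj z b) (hzd : ¬ G.Adj z d) (hze : ¬ G.Adj z e)
    (nad : a ≠ d) (nae : a ≠ e) (nbd : b ≠ d) (nbe : b ≠ e)
    (nza : z ≠ a) (nzb : z ≠ b) (nzd : z ≠ d) (nze : z ≠ e) : False := by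
  have nab : a ≠ b := hab.ne
  have nde : d ≠ e := hde.ne
  apply hfree
  refine ⟨⟨![a, b, d, e, z], ?_⟩, ?_⟩
  · intro i j hij
    fin_cases i <;> fin_cases j <;> simp_all <;> tauto
  · intro i j
    have hba := hab.symm
    have hed := hde.symm
    have hda : ¬ G.Adj d a := fun h => had h.symm
    have hea : ¬ G.Adj e a := fun h => hae h.symm
    have hdb : ¬ G.Adj d b := fun h => hbd h.symm
    have heb : ¬ G.Adj e b := fun h => hbe h.symm
    have haz : ¬ G.Adj a z := fun h => hza h.symm
    have hbz : ¬ G.Adj b z := fun h => hzb h.symm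
    have hdz : ¬ G.Adj d z := fun h => hzd h.symm
    have hez : ¬ G.Adj e z := fun h => hze h.symm
    fin_cases i <;> fin_cases j <;>
      simp [twoP2P1, SimpleGraph.fromRel_adj, G.irrefl] <;>
      first
        | assumption
        | (intro h; exact absurd h (by assumption))
        | decide

/-- Case 2, Claim 5: if `t ≥ 11`, `G` is `t`-tough, `(2P2 ∪ P1)`-free, with
`δ(G) ≤ n/(t+1) - 1` and `|N(u) ∪ N(v)| > 5n/12` for every edge `uv`, `S` the set of
vertices of degree less than `5n/24`, `S1 ⊆ S` those of degree less than `n/(t+1)`, `M` a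
`K_{1,2}`-matching with centers precisely `S1`, `L` the set of leaf pairs of the stars of
`M`, and `G2*` obtained from `G2 = G - S` by adding the pairs of `L` as edges, then
`κ(G2*) ≥ |L| + α(G2*)`. -/
theorem stmt_15 {V : Type*} [Fintype V] (t : ℝ) (ht : 11 ≤ t) (G : SimpleGraph V)
    (htough : G.Tough t) (hfree : G.IndFree twoP2P1)
    (hδ : (G.minDeg : ℝ) ≤ (Fintype.card V : ℝ) / (t + 1) - 1)
    (hedge : ∀ u v : V, G.Adj u v →
      5 * (Fintype.card V : ℝ) / 12 < ((G.neighborSet u ∪ G.neighborSet v).ncard : ℝ))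
    (S : Set V) (hS : S = {w : V | (G.deg w : ℝ) < 5 * (Fintype.card V) / 24})
    (S1 : Set V) (hS1 : S1 = {x ∈ S | (G.deg x : ℝ) < (Fintype.card V : ℝ) / (t + 1)})
    (M : G.Subgraph) (hM1 : S1 ⊆ M.verts)
    (hM2 : ∀ x ∈ S1, (M.neighborSet x).ncard = 2)
    (hM3 : ∀ w ∈ M.verts \ S1, (M.neighborSet w).ncard = 1)
    (hM4 : ∀ a b : V, M.Adj a b → (a ∈ S1 ↔ b ∉ S1))
    (L : Set (Sym2 V))
    (hL : L = {e : Sym2 V | ∃ x ∈ S1, ∃ a b : V,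
      a ≠ b ∧ M.Adj x a ∧ M.Adj x b ∧ e = s(a, b)})
    (G2star : SimpleGraph ↥(Sᶜ))
    (hG2star : G2star = G.induce Sᶜ ⊔
      SimpleGraph.fromRel (fun a b : ↥(Sᶜ) => s((a : V), (b : V)) ∈ L)) :
    L.ncard + G2star.indepNum' ≤ G2star.kappa := by
  classical
  set nR : ℝ := (Fintype.card V : ℝ) with hnR
  have hn0 : 0 ≤ nR := by positivity
  have ht1 : (0:ℝ) < t + 1 := by linarith
  set B : ℝ := nR / (t + 1) with hB
  -- V is nonempty
  have hVne : Nonempty V := by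
    by_contra h
    have hemp : IsEmpty V := not_nonempty_iff.mp h
    have hcard : Fintype.card V = 0 := Fintype.card_eq_zero
    have hmin : G.minDeg = 0 := by
      have hr : Set.range G.deg = ∅ := by
        simp [Set.range_eq_empty]
      simp [SimpleGraph.minDeg, hr]
    have hn : nR = 0 := by rw [hnR, hcard]; norm_num
    rw [hmin] at hδ
    have hB0 : B = 0 := by rw [hB, hn, zero_div]
    rw [hB0] at hδ
    simp only [Nat.cast_zero] at hδ
    linarith
  have hB1 : 1 ≤ B := by
    have h0 : (0:ℝ) ≤ (G.minDeg : ℝ) := Nat.cast_nonneg _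
    linarith
  have hBn : 12 * B ≤ nR := by
    have he : (t+1) * B = nR := by rw [hB]; field_simp
    have := mul_le_mul_of_nonneg_right (by linarith : (12:ℝ) ≤ t+1) (by linarith : (0:ℝ) ≤ B)
    linarith
  -- minimum degree vertex
  obtain ⟨v, hv⟩ : ∃ v, G.deg v = G.minDeg := by
    have hne : (Set.range G.deg).Nonempty := Set.range_nonempty _
    obtain ⟨v, hv⟩ := Nat.sInf_mem hne
    exact ⟨v, hv⟩
  have hdegv : (G.deg v : ℝ) ≤ B - 1 := by rw [hv]; exact hδ
  have hvS : v ∈ S := by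
    rw [hS]; show (G.deg v : ℝ) < 5 * nR / 24
    linarith [hBn, hB1]
  have hvS1 : v ∈ S1 := by
    rw [hS1]; exact ⟨hvS, by linarith⟩
  -- S is independent
  have hSindep : S.Pairwise (fun u w => ¬ G.Adj u w) := by
    intro u hu w hw hne hadj
    rw [hS] at hu hw
    have h1 : (G.deg u : ℝ) < 5 * nR / 24 := hu
    have h2 : (G.deg w : ℝ) < 5 * nR / 24 := hw
    have h3 := hedge u w hadj
    have h4 : ((G.neighborSet u ∪ G.neighborSet w).ncard : ℝ) ≤ (G.deg u : ℝ) + (G.deg w : ℝ) := by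
      have := Set.ncard_union_le (G.neighborSet u) (G.neighborSet w)
      rw [SimpleGraph.deg, SimpleGraph.deg]
      exact_mod_cast this
    linarith
  -- any independent set has (real) size at most B
  have indep_le_B : ∀ I : Set V, I.Pairwise (fun u w => ¬ G.Adj u w) → (I.ncard : ℝ) ≤ B := by
    intro I hI
    rcases le_or_gt I.ncard 1 with h | h
    · calc (I.ncard : ℝ) ≤ 1 := by exact_mod_cast h
        _ ≤ B := hB1
    · have hb := tough_indep_bound htough hI (by omega)
      rw [← hnR] at hb
      rw [hB, le_div_iff₀ ht1]
      nlinarith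
  have hS1S : S1 ⊆ S := by rw [hS1]; exact fun x hx => hx.1
  have hσB : (S.ncard : ℝ) ≤ B := indep_le_B S hSindep
  have hσ1B : (S1.ncard : ℝ) ≤ B := indep_le_B S1 (hSindep.mono hS1S)
  -- |L| <= |S1|
  have hLspec : ∀ e ∈ L, ∃ x, x ∈ S1 ∧ ∃ a b : V,
      a ≠ b ∧ M.Adj x a ∧ M.Adj x b ∧ e = s(a, b) := by
    intro e he; rw [hL] at he; exact he
  have hLle : L.ncard ≤ S1.ncard := by
    set f : Sym2 V → V := fun e => if he : e ∈ L then (hLspec e he).choose else v with hf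
    have hmaps : ∀ e ∈ L, f e ∈ S1 := by
      intro e he
      rw [hf]; simp only [dif_pos he]
      exact (hLspec e he).choose_spec.1
    have hdet : ∀ e ∈ L, ∀ p q : V, p ≠ q → (M.neighborSet (f e)) = {p, q} → e = s(p, q) := by
      intro e he p q hpq hset
      obtain ⟨-, a, b, hane, hMa, hMb, hesab⟩ := (hLspec e he).choose_spec
      rw [hf] at hset; simp only [dif_pos he] at hset
      have ha : a ∈ ({p, q} : Set V) := by rw [← hset]; exact hMa
      have hb : b ∈ ({p, q} : Set V) := by rw [← hset]; exact hMb
      rcases ha with rfl | rfl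
      · rcases hb with rfl | rfl
        · exact absurd rfl hane
        · rw [hesab]
      · rcases hb with rfl | rfl
        · rw [hesab, Sym2.eq_swap]
        · exact absurd rfl hane
    apply Set.ncard_le_ncard_of_injOn f hmaps ?_ (Set.toFinite _)
    intro e1 he1 e2 he2 hfe
    have hx1 : f e1 ∈ S1 := hmaps e1 he1
    obtain ⟨p, q, hpq, hset⟩ := Set.ncard_eq_two.mp (hM2 (f e1) hx1)
    have h1 := hdet e1 he1 p q hpq hset
    have h2 := hdet e2 he2 p q hpq (by rw [← hfe]; exact hset)
    rw [h1, h2]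
  -- independence number facts
  have hIdx : ∃ I : Set ↥(Sᶜ), G2star.IsIndepSet' I ∧ I.ncard = G2star.indepNum' := by
    have hne : {k : ℕ | ∃ s : Set ↥(Sᶜ), G2star.IsIndepSet' s ∧ s.ncard = k}.Nonempty :=
      ⟨0, ∅, by intro x hx; simp at hx, by simp⟩
    have hbdd : BddAbove {k : ℕ | ∃ s : Set ↥(Sᶜ), G2star.IsIndepSet' s ∧ s.ncard = k} := by
      refine ⟨Nat.card ↥(Sᶜ), ?_⟩
      rintro k ⟨s, -, rfl⟩
      calc s.ncard ≤ (Set.univ : Set ↥(Sᶜ)).ncard :=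
            Set.ncard_le_ncard (Set.subset_univ s) (Set.toFinite _)
        _ = Nat.card ↥(Sᶜ) := by rw [Set.ncard_univ]
    exact Nat.sSup_mem hne hbdd
  have hle2 : G.induce Sᶜ ≤ G2star := by rw [hG2star]; exact le_sup_left
  have himind : ∀ I : Set ↥(Sᶜ), G2star.IsIndepSet' I →
      (Subtype.val '' I).Pairwise (fun u w => ¬ G.Adj u w) := by
    intro I hI x hx y hy hne hadj
    obtain ⟨a, ha, rfl⟩ := hx
    obtain ⟨b, hb, rfl⟩ := hy
    have hab : a ≠ b := fun h => hne (by rw [h])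
    have : (G.induce Sᶜ).Adj a b := hadj
    exact hI ha hb hab (hle2 this)
  have hαB : (G2star.indepNum' : ℝ) ≤ B := by
    obtain ⟨I, hI, hIc⟩ := hIdx
    have h1 := indep_le_B (Subtype.val '' I) (himind I hI)
    rw [Set.ncard_image_of_injective I Subtype.val_injective, hIc] at h1
    exact h1
  -- main estimate: every cutset of G2star has at least |L| + indepNum' vertices
  have key : ∀ X : Set ↥(Sᶜ), G2star.IsCutset X → L.ncard + G2star.indepNum' ≤ X.ncard := by
    intro X hX
    by_contra hlt
    push_neg at hlt
    have hkR : (X.ncard : ℝ) < (L.ncard : ℝ) + (G2star.indepNum' : ℝ) := by exact_mod_cast hlt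
    have hℓσ1 : (L.ncard : ℝ) ≤ (S1.ncard : ℝ) := by exact_mod_cast hLle
    have hk2B : (X.ncard : ℝ) < 2 * B := by linarith [hσ1B, hαB]
    set X' : Set V := Subtype.val '' X with hX'
    have hX'card : X'.ncard = X.ncard := Set.ncard_image_of_injective X Subtype.val_injective
    set A : Set V := Sᶜ \ X' with hA
    let hom : G.induce A →g G2star.induce (Xᶜ) :=
      { toFun := fun a => ⟨⟨a.1, a.2.1⟩, fun hx => a.2.2 ⟨⟨a.1, a.2.1⟩, hx, rfl⟩⟩,
        map_rel' := by
          intro a b hab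
          have h1 : (G.induce Sᶜ).Adj ⟨a.1, a.2.1⟩ ⟨b.1, b.2.1⟩ := hab
          exact hle2 h1 }
    have hsurj : Function.Surjective (SimpleGraph.ConnectedComponent.map hom) := by
      intro c
      obtain ⟨y, rfl⟩ := c.exists_rep
      refine ⟨(G.induce A).connectedComponentMk ⟨y.1.1, ⟨y.1.2, ?_⟩⟩, ?_⟩
      · rintro ⟨z, hz, hzv⟩
        have hzy : z = y.1 := Subtype.ext hzv
        exact y.2 (hzy ▸ hz)
      · rw [SimpleGraph.ConnectedComponent.map_mk]
        congr 1
    have hX2 : 2 ≤ Nat.card (G2star.induce Xᶜ).ConnectedComponent := hX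
    have hc2 : 2 ≤ Nat.card (G.induce A).ConnectedComponent :=
      le_trans hX2 (Nat.card_le_card_of_surjective _ hsurj)
    obtain ⟨c1, c2, hcne⟩ :=
      (Finite.one_lt_card_iff_nontrivial.mp (show 1 < Nat.card (G.induce A).ConnectedComponent by omega)).exists_pair_ne
    set csupp : (G.induce A).ConnectedComponent → Set V :=
      fun c => {x : V | ∃ h : x ∈ A, (G.induce A).connectedComponentMk ⟨x, h⟩ = c} with hcsupp
    have hcsA : ∀ {c : (G.induce A).ConnectedComponent} {x : V}, x ∈ csupp c → x ∈ A := by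
      rintro c x ⟨h, -⟩; exact h
    have hmk_mem : ∀ x : ↥A, x.1 ∈ csupp ((G.induce A).connectedComponentMk x) :=
      fun x => ⟨x.2, rfl⟩
    have hadjmem : ∀ {c : (G.induce A).ConnectedComponent} {x y : V},
        x ∈ csupp c → y ∈ A → G.Adj x y → y ∈ csupp c := by
      rintro c x y ⟨hx, rfl⟩ hy hadj
      refine ⟨hy, ?_⟩
      have h2 : (G.induce A).Adj ⟨y, hy⟩ ⟨x, hx⟩ := hadj.symm
      exact SimpleGraph.ConnectedComponent.connectedComponentMk_eq_of_adj h2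
    have hdisj : ∀ {c c' : (G.induce A).ConnectedComponent} {x : V},
        c ≠ c' → x ∈ csupp c → x ∈ csupp c' → False := by
      rintro c c' x hne ⟨hx, rfl⟩ ⟨hx', he⟩
      exact hne he
    have hcross : ∀ {c c' : (G.induce A).ConnectedComponent} {x y : V},
        c ≠ c' → x ∈ csupp c → y ∈ csupp c' → ¬ G.Adj x y := by
      intro c c' x y hne hx hy hadj
      exact hdisj hne hx (hadjmem hy (hcsA hx) hadj.symm)
    have hcrossne : ∀ {c c' : (G.induce A).ConnectedComponent} {x y : V},
        c ≠ c' → x ∈ csupp c → y ∈ csupp c' → x ≠ y := by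
      rintro c c' x y hne hx hy rfl
      exact hdisj hne hx hy
    have hnbhd : ∀ {c : (G.induce A).ConnectedComponent} {x : V}, x ∈ csupp c →
        G.neighborSet x ⊆ csupp c ∪ (S ∪ X') := by
      intro c x hx y hy
      by_cases hyS : y ∈ S
      · exact Or.inr (Or.inl hyS)
      · by_cases hyX : y ∈ X'
        · exact Or.inr (Or.inr hyX)
        · exact Or.inl (hadjmem hx ⟨hyS, hyX⟩ hy)
    have hexedge : ∀ {c : (G.induce A).ConnectedComponent} {x y : V},
        x ∈ csupp c → y ∈ csupp c → x ≠ y →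
        ∃ a ∈ csupp c, ∃ b ∈ csupp c, G.Adj a b := by
      rintro c x y ⟨hx, hxc⟩ ⟨hy, hyc⟩ hne
      have hreach : (G.induce A).Reachable ⟨x, hx⟩ ⟨y, hy⟩ :=
        SimpleGraph.ConnectedComponent.exact (hxc.trans hyc.symm)
      obtain ⟨p⟩ := hreach
      have hnil : ¬ p.Nil :=
        SimpleGraph.Walk.not_nil_of_ne (fun h => hne (congrArg Subtype.val h))
      have hadj := p.adj_snd hnil
      refine ⟨x, ⟨hx, hxc⟩, (p.getVert 1).1, ⟨(p.getVert 1).2, ?_⟩, hadj⟩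
      rw [← hxc]
      exact SimpleGraph.ConnectedComponent.connectedComponentMk_eq_of_adj hadj.symm
    -- Case (i): a component with no edge inside
    have caseI : ∀ c : (G.induce A).ConnectedComponent,
        ¬ (∃ a ∈ csupp c, ∃ b ∈ csupp c, G.Adj a b) → False := by
      intro c hnoedge
      obtain ⟨y, hy⟩ := c.exists_rep
      have hu : y.1 ∈ csupp c := hy ▸ hmk_mem y
      have husing : ∀ z ∈ csupp c, z = y.1 := by
        intro z hz
        by_contra hne
        exact hnoedge (hexedge hz hu hne)
      have huA : y.1 ∈ A := hcsA hu
      have huS : y.1 ∉ S := huA.1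
      have hudeg : 5 * nR / 24 ≤ (G.deg y.1 : ℝ) := by
        by_contra hlt2
        push_neg at hlt2
        exact huS (by rw [hS]; exact hlt2)
      have hNu : G.neighborSet y.1 ⊆ S ∪ X' := by
        intro w hw
        rcases hnbhd hu hw with h | h
        · exfalso
          have hwu : w = y.1 := husing w h
          rw [hwu] at hw
          exact G.irrefl hw
        · exact h
      by_cases hsS1 : ∃ s, s ∈ G.neighborSet y.1 ∧ s ∈ S1
      · obtain ⟨s, hsu, hs1⟩ := hsS1
        have hadj : G.Adj y.1 s := hsu
        have h3 := hedge y.1 s hadj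
        have h4 : ((G.neighborSet y.1 ∪ G.neighborSet s).ncard : ℝ)
            ≤ ((G.neighborSet y.1).ncard : ℝ) + (G.deg s : ℝ) := by
          have h0 := Set.ncard_union_le (G.neighborSet y.1) (G.neighborSet s)
          rw [SimpleGraph.deg]
          exact_mod_cast h0
        have h5 : ((G.neighborSet y.1).ncard : ℝ) ≤ (S.ncard : ℝ) + (X.ncard : ℝ) := by
          have hsub := Set.ncard_le_ncard hNu (Set.toFinite _)
          have hun := Set.ncard_union_le S X'
          rw [hX'card] at hun
          exact_mod_cast le_trans hsub hun
        have h6 : (G.deg s : ℝ) < B := by rw [hS1] at hs1; exact hs1.2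
        linarith [hσB, hk2B, hBn]
      · push_neg at hsS1
        have hNu2 : G.neighborSet y.1 ⊆ (S \ S1) ∪ X' := by
          intro w hw
          rcases hNu hw with h | h
          · exact Or.inl ⟨h, hsS1 w hw⟩
          · exact Or.inr h
        have h5n : G.deg y.1 ≤ (S \ S1).ncard + X.ncard := by
          rw [SimpleGraph.deg]
          refine le_trans (Set.ncard_le_ncard hNu2 (Set.toFinite _)) ?_
          rw [← hX'card]
          exact Set.ncard_union_le _ _
        have h8 : S1.ncard ≤ S.ncard := Set.ncard_le_ncard hS1S (Set.toFinite _)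
        have h5 : (G.deg y.1 : ℝ) ≤ ((S.ncard : ℝ) - (S1.ncard : ℝ)) + (X.ncard : ℝ) := by
          have h9 := (Nat.cast_le (α := ℝ)).mpr h5n
          rw [Set.ncard_diff hS1S] at h9
          rw [Nat.cast_add, Nat.cast_sub h8] at h9
          linarith
        linarith [hσB, hαB, hkR, hℓσ1, hBn, hudeg]
    -- Case (ii): a component with an edge, all of whose "far" part is independent
    have caseII : ∀ c : (G.induce A).ConnectedComponent,
        (∃ a ∈ csupp c, ∃ b ∈ csupp c, G.Adj a b) →
        ¬ (∃ a ∈ csupp c \ G.neighborSet v, ∃ b ∈ csupp c \ G.neighborSet v, G.Adj a b) →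
        False := by
      intro c hedgec hnov
      obtain ⟨d, hdc, e, hec, hde⟩ := hedgec
      have hind : (csupp c \ G.neighborSet v).Pairwise (fun x y => ¬ G.Adj x y) := by
        intro x hx y hy hne hadj
        exact hnov ⟨x, hx, y, hy, hadj⟩
      have h1 : ((csupp c \ G.neighborSet v).ncard : ℝ) ≤ B := indep_le_B _ hind
      have h2n : (csupp c).ncard ≤ (G.neighborSet v).ncard + (csupp c \ G.neighborSet v).ncard := by
        refine le_trans (Set.ncard_le_ncard ?_ (Set.toFinite _)) (Set.ncard_union_le _ _)
        intro x hx
        by_cases hxv : x ∈ G.neighborSet v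
        · exact Or.inl hxv
        · exact Or.inr ⟨hx, hxv⟩
      have h2 : ((csupp c).ncard : ℝ) ≤ (B - 1) + B := by
        have h9 := (Nat.cast_le (α := ℝ)).mpr h2n
        push_cast at h9
        have h10 : ((G.neighborSet v).ncard : ℝ) = (G.deg v : ℝ) := rfl
        rw [h10] at h9
        linarith [hdegv, h1]
      have h3 := hedge d e hde
      have h4 : (G.neighborSet d ∪ G.neighborSet e) ⊆ csupp c ∪ (S ∪ X') :=
        Set.union_subset (hnbhd hdc) (hnbhd hec)
      have h5 : ((G.neighborSet d ∪ G.neighborSet e).ncard : ℝ)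
          ≤ ((csupp c).ncard : ℝ) + ((S.ncard : ℝ) + (X.ncard : ℝ)) := by
        have hsub := Set.ncard_le_ncard h4 (Set.toFinite _)
        have hun := Set.ncard_union_le (csupp c) (S ∪ X')
        have hun2 := Set.ncard_union_le S X'
        rw [hX'card] at hun2
        have h9 := le_trans hsub (le_trans hun (Nat.add_le_add_left hun2 _))
        exact_mod_cast h9
      linarith [hσB, hk2B, hBn, h2]
    -- dispatch
    by_cases hE1 : ∃ a ∈ csupp c1, ∃ b ∈ csupp c1, G.Adj a b
    · by_cases hE2 : ∃ a ∈ csupp c2, ∃ b ∈ csupp c2, G.Adj a b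
      · by_cases hF1 : ∃ a ∈ csupp c1 \ G.neighborSet v, ∃ b ∈ csupp c1 \ G.neighborSet v, G.Adj a b
        · by_cases hF2 : ∃ a ∈ csupp c2 \ G.neighborSet v, ∃ b ∈ csupp c2 \ G.neighborSet v, G.Adj a b
          · obtain ⟨a, ⟨hac, hav⟩, b, ⟨hbc, hbv⟩, hab⟩ := hF1
            obtain ⟨d, ⟨hdc, hdv⟩, e, ⟨hec, hev⟩, hde⟩ := hF2
            refine no_2P2P1 hfree hab hde
              (hcross hcne hac hdc) (hcross hcne hac hec)
              (hcross hcne hbc hdc) (hcross hcne hbc hec)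
              hav hbv hdv hev
              (hcrossne hcne hac hdc) (hcrossne hcne hac hec)
              (hcrossne hcne hbc hdc) (hcrossne hcne hbc hec)
              (fun h => (hcsA hac).1 (h ▸ hvS)) (fun h => (hcsA hbc).1 (h ▸ hvS))
              (fun h => (hcsA hdc).1 (h ▸ hvS)) (fun h => (hcsA hec).1 (h ▸ hvS))
          · exact caseII c2 hE2 hF2
        · exact caseII c1 hE1 hF1
      · exact caseI c2 hE2
    · exact caseI c1 hE1
  have hℓB : (L.ncard : ℝ) ≤ B := le_trans (by exact_mod_cast hLle) hσ1B
  by_cases hcomp : G2star.IsCompleteGraph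
  · have hk : G2star.kappa = Nat.card ↥(Sᶜ) - 1 := by
      rw [SimpleGraph.kappa, if_pos hcomp]
    rw [hk]
    obtain ⟨I, hI, hIc⟩ := hIdx
    have hα1 : G2star.indepNum' ≤ 1 := by
      by_contra hgt
      push_neg at hgt
      rw [← hIc] at hgt
      obtain ⟨x, hx, y, hy, hxy⟩ := (Set.one_lt_ncard (Set.toFinite _)).mp hgt
      exact hI hx hy hxy (hcomp x y hxy)
    have hcard : ((Nat.card ↥(Sᶜ)) : ℝ) = nR - (S.ncard : ℝ) := by
      rw [Nat.card_coe_set_eq]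
      have h0 := Set.ncard_add_ncard_compl S
      rw [Nat.card_eq_fintype_card] at h0
      have h1 : (S.ncard : ℝ) + ((Sᶜ : Set V).ncard : ℝ) = (Fintype.card V : ℝ) := by
        exact_mod_cast h0
      rw [← hnR] at h1
      linarith
    have hfinal : L.ncard + G2star.indepNum' + 1 ≤ Nat.card ↥(Sᶜ) := by
      have hreal : ((L.ncard + G2star.indepNum' + 1 : ℕ) : ℝ) ≤ ((Nat.card ↥(Sᶜ)) : ℝ) := by
        push_cast
        have hα1R : (G2star.indepNum' : ℝ) ≤ 1 := by exact_mod_cast hα1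
        rw [hcard]
        linarith [hℓB, hσB, hBn, hB1]
      exact_mod_cast hreal
    omega
  · have hk : G2star.kappa = sInf {m : ℕ | ∃ Xs : Set ↥(Sᶜ), G2star.IsCutset Xs ∧ Xs.ncard = m} := by
      rw [SimpleGraph.kappa, if_neg hcomp]
    rw [hk]
    have hnonempty : {m : ℕ | ∃ Xs : Set ↥(Sᶜ), G2star.IsCutset Xs ∧ Xs.ncard = m}.Nonempty := by
      rw [SimpleGraph.IsCompleteGraph] at hcomp
      push_neg at hcomp
      obtain ⟨u, w, hne, hnadj⟩ := hcomp
      refine ⟨(({u, w} : Set ↥(Sᶜ))ᶜ).ncard, ({u, w} : Set ↥(Sᶜ))ᶜ, ?_, rfl⟩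
      show 2 ≤ G2star.compCount ({u, w}ᶜ)
      rw [SimpleGraph.compCount, compl_compl]
      rw [edgeless_card_cc _ ?_]
      · rw [Nat.card_coe_set_eq, Set.ncard_pair hne]
      · rintro ⟨x, hx⟩ ⟨y, hy⟩ hadj
        have hxy : G2star.Adj x y := hadj
        simp only [Set.mem_insert_iff, Set.mem_singleton_iff] at hx hy
        rcases hx with rfl | rfl
        · rcases hy with rfl | rfl
          · exact G2star.irrefl hxy
          · exact hnadj hxy
        · rcases hy with rfl | rfl
          · exact hnadj hxy.symm
          · exact G2star.irrefl hxy
    refine le_csInf hnonempty ?_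
    rintro m ⟨Xs, hXs, rfl⟩
    exact key Xs hXs
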